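/- Let f: 𝔄 → 𝔅 be an elementary team embedding between τ-structures and let n < ω. Then the restriction of f to subsets of A^n is an elementary embedding from the Boolean algebra (Pow(A^n), ∪, ∩, complement, ∅, A^n) to the Boolean algebra (Pow(B^n), ∪, ∩, complement, ∅, B^n), where elementarity is with respect to the first-order language of Boolean algebras. -/

import Mathlib

open FirstOrder Language Set

universe u v w x

namespace TeamSem

/-- A purely relational language consisting of `k` fresh relation symbols with
prescribed arities. -/
def relLang (k : ℕ) (ar : Fin k → ℕ) : FirstOrder.Language where
  Functions := fun _ => Empty
  Relations := fun n => {i : Fin k // ar i = n}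

/-- Interpret the `k` fresh relation symbols by the given relations on `M`. -/
def relStructure {k : ℕ} {ar : Fin k → ℕ} {M : Type w}
    (S : ∀ i : Fin k, Set (Fin (ar i) → M)) : (relLang k ar).Structure M where
  funMap := fun f _ => f.elim
  RelMap := fun R v => (fun j => v (Fin.cast R.2 j)) ∈ S R.1

/-- Satisfaction of a first-order sentence over `L` together with `k` fresh relation
symbols, in the expansion of `M` interpreting the fresh symbols by `S`. -/
def RealizeWith {L : FirstOrder.Language.{u, v}} (M : Type w) [L.Structure M] {k : ℕ} {ar : Fin k → ℕ}
    (φ : (L.sum (relLang k ar)).Sentence) (S : ∀ i : Fin k, Set (Fin (ar i) → M)) : Prop :=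
  letI := relStructure S
  M ⊨ φ

/-- An existential second-order sentence over `L`: finitely many fresh relation symbols
together with a first-order sentence over the enlarged language. -/
structure ESOSentence (L : FirstOrder.Language.{u, v}) where
  k : ℕ
  ar : Fin k → ℕ
  toSentence : (L.sum (relLang k ar)).Sentence

/-- Satisfaction of an existential second-order sentence. -/
def ESOSentence.Realize {L : FirstOrder.Language.{u, v}} (ψ : ESOSentence L) (M : Type w)
    [L.Structure M] : Prop :=
  ∃ S : ∀ i : Fin ψ.k, Set (Fin (ψ.ar i) → M), RealizeWith M ψ.toSentence S

/-- The Cartesian product of an `n`-ary and an `m`-ary relation. -/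
def teamProd {A : Type w} {n m : ℕ} (X : Set (Fin n → A)) (Y : Set (Fin m → A)) :
    Set (Fin (n + m) → A) :=
  {s | (fun i => s (Fin.castAdd m i)) ∈ X ∧ (fun j => s (Fin.natAdd n j)) ∈ Y}

/-- The generalized projection `Pr_ι` of an `n`-ary relation. -/
def teamProj {A : Type w} {n m : ℕ} (ι : Fin m → Fin n) (X : Set (Fin n → A)) :
    Set (Fin m → A) :=
  (fun b => b ∘ ι) '' X

/-- The diagonal (identity) relation on `A`. -/
def diag (A : Type w) : Set (Fin 2 → A) := {s | s 0 = s 1}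

/-- The interpretation of a relation symbol, as a set of tuples. -/
def relSet (L : FirstOrder.Language.{u, v}) (A : Type w) [L.Structure A] {n : ℕ} (R : L.Relations n) :
    Set (Fin n → A) :=
  {s | Structure.RelMap R s}

/-- The graph of the interpretation of a function symbol, as a set of tuples. -/
def funGraph (L : FirstOrder.Language.{u, v}) (A : Type w) [L.Structure A] {n : ℕ} (F : L.Functions n) :
    Set (Fin (n + 1) → A) :=
  {s | Structure.funMap F (fun i => s i.castSucc) = s (Fin.last n)}

/-- A family of relations on `A` that is closed under the operations generating the
closure `cl`; a family `𝒴` satisfies `𝒴 = cl(𝒴)` precisely when it is closed. -/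
structure IsClosedFamily (L : FirstOrder.Language.{u, v}) (A : Type w) [L.Structure A]
    (𝒴 : ∀ n : ℕ, Set (Set (Fin n → A))) : Prop where
  empty_mem : ∀ n, (∅ : Set (Fin n → A)) ∈ 𝒴 n
  univ_mem : ∀ n, (Set.univ : Set (Fin n → A)) ∈ 𝒴 n
  inter_mem : ∀ (n : ℕ) (X Y : Set (Fin n → A)), X ∈ 𝒴 n → Y ∈ 𝒴 n → X ∩ Y ∈ 𝒴 n
  prod_mem : ∀ (n m : ℕ) (X : Set (Fin n → A)) (Y : Set (Fin m → A)),
    X ∈ 𝒴 n → Y ∈ 𝒴 m → teamProd X Y ∈ 𝒴 (n + m)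
  proj_mem : ∀ (n m : ℕ) (ι : Fin m → Fin n) (X : Set (Fin n → A)),
    X ∈ 𝒴 n → teamProj ι X ∈ 𝒴 m
  diag_mem : diag A ∈ 𝒴 2
  rel_mem : ∀ (n : ℕ) (R : L.Relations n), relSet L A R ∈ 𝒴 n
  graph_mem : ∀ (n : ℕ) (F : L.Functions n), funGraph L A F ∈ 𝒴 (n + 1)

/-- A partial team map from `A` to `B`.  Arities are preserved by typing; the domain
and the range are closed families (equivalently, `dom f = cl(dom f)` and
`ran f = cl(ran f)`); the empty relation of each arity is mapped to the empty relation
(in the untyped setting this is automatic for arity-preserving maps). -/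
structure PartialTeamMap (L : FirstOrder.Language.{u, v}) (A : Type w) (B : Type x)
    [L.Structure A] [L.Structure B] where
  dom : ∀ n : ℕ, Set (Set (Fin n → A))
  toFun : ∀ n : ℕ, Set (Fin n → A) → Set (Fin n → B)
  dom_closed : IsClosedFamily L A dom
  ran_closed : IsClosedFamily L B fun n => toFun n '' dom n
  map_empty : ∀ n, toFun n (∅ : Set (Fin n → A)) = ∅

namespace PartialTeamMap

variable {L : FirstOrder.Language.{u, v}} {A : Type w} {B : Type x} [L.Structure A] [L.Structure B]

/-- The range family of a partial team map. -/
def ran (f : PartialTeamMap L A B) : ∀ n : ℕ, Set (Set (Fin n → B)) :=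
  fun n => f.toFun n '' f.dom n

/-- Conditions (PI1)–(PI6): `f` is a partial team isomorphism. -/
structure IsIso (f : PartialTeamMap L A B) : Prop where
  empty_iff : ∀ (n : ℕ) (X : Set (Fin n → A)), X ∈ f.dom n → (X = ∅ ↔ f.toFun n X = ∅)
  univ_iff : ∀ (n : ℕ) (X : Set (Fin n → A)), X ∈ f.dom n →
    (X = Set.univ ↔ f.toFun n X = Set.univ)
  singleton_iff : ∀ (n : ℕ) (X : Set (Fin n → A)), X ∈ f.dom n →
    ((∃ s, X = {s}) ↔ ∃ t, f.toFun n X = {t})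
  map_prod : ∀ (n m : ℕ) (X : Set (Fin n → A)) (Y : Set (Fin m → A)),
    X ∈ f.dom n → Y ∈ f.dom m →
    f.toFun (n + m) (teamProd X Y) = teamProd (f.toFun n X) (f.toFun m Y)
  map_proj : ∀ (n m : ℕ) (ι : Fin m → Fin n) (X : Set (Fin n → A)), X ∈ f.dom n →
    f.toFun m (teamProj ι X) = teamProj ι (f.toFun n X)
  subset_iff : ∀ (n : ℕ) (X Y : Set (Fin n → A)), X ∈ f.dom n → Y ∈ f.dom n →
    (X ⊆ Y ↔ f.toFun n X ⊆ f.toFun n Y)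
  map_diag : f.toFun 2 (diag A) = diag B
  map_rel : ∀ (n : ℕ) (R : L.Relations n), f.toFun n (relSet L A R) = relSet L B R
  map_graph : ∀ (n : ℕ) (F : L.Functions n), f.toFun (n + 1) (funGraph L A F) = funGraph L B F

/-- `f` is a partial elementary team map: it preserves (in both directions) all
first-order sentences over `L` augmented by fresh relation symbols interpreted by
nonempty relations from the domain of `f`. -/
def IsElementary (f : PartialTeamMap L A B) : Prop :=
  ∀ (k : ℕ) (ar : Fin k → ℕ) (φ : (L.sum (relLang k ar)).Sentence)
    (X : ∀ i : Fin k, Set (Fin (ar i) → A)),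
    (∀ i, X i ∈ f.dom (ar i)) → (∀ i, (X i).Nonempty) →
    (RealizeWith A φ X ↔ RealizeWith B φ fun i => f.toFun (ar i) (X i))

/-- `f` is total: its domain consists of all relations on `A`. -/
def Total (f : PartialTeamMap L A B) : Prop := ∀ n, f.dom n = Set.univ

/-- Every singleton `{a}`, `a : A`, of arity 1 is in the domain of `f`. -/
def ElementTotal (f : PartialTeamMap L A B) : Prop :=
  ∀ a : A, ({fun _ => a} : Set (Fin 1 → A)) ∈ f.dom 1

/-- Every singleton `{b}`, `b : B`, of arity 1 is in the range of `f`. -/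
def ElementSurjective (f : PartialTeamMap L A B) : Prop :=
  ∀ b : B, ({fun _ => b} : Set (Fin 1 → B)) ∈ f.ran 1

end PartialTeamMap

end TeamSem

namespace TeamSem

/-- The first-order language of Boolean algebras: two constant symbols `⊥, ⊤`, one
unary function symbol `¬`, and two binary function symbols `∨, ∧`. -/
def boolLang : FirstOrder.Language where
  Functions
    | 0 => Bool
    | 1 => Unit
    | 2 => Bool
    | _ + 3 => Empty
  Relations := fun _ => Empty

/-- A Boolean algebra regarded as a structure for the language of Boolean algebras
in the obvious way. -/
instance boolStructure (α : Type w) [BooleanAlgebra α] : boolLang.Structure α where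
  funMap {n} :=
    match n with
    | 0 => fun b _ => bif b then ⊤ else ⊥
    | 1 => fun _ v => (v 0)ᶜ
    | 2 => fun b v => bif b then v 0 ⊔ v 1 else v 0 ⊓ v 1
    | _ + 3 => fun e _ => e.elim
  RelMap := fun r _ => r.elim


section Aux

/-- `C` has at least `m` elements. -/
def HasGe {S : Type*} (C : Set S) (m : ℕ) : Prop :=
  ∃ g : Fin m → S, Function.Injective g ∧ ∀ j, g j ∈ C

/-- Same size truncated at infinity. -/
def SameSize {S T : Type*} (C : Set S) (D : Set T) : Prop :=
  ∀ m : ℕ, HasGe C m ↔ HasGe D m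

theorem hasGe_of_subset {S : Type*} {C t : Set S} {m : ℕ} (hts : t ⊆ C) (htfin : t.Finite)
    (htcard : t.ncard = m) : HasGe C m := by
  classical
  have hcard : htfin.toFinset.card = m := by
    rw [← htcard, Set.ncard_eq_toFinset_card _ htfin]
  refine ⟨fun j => (htfin.toFinset.equivFin.symm (Fin.cast hcard.symm j) : S), ?_, ?_⟩
  · intro a b hab
    have := htfin.toFinset.equivFin.symm.injective (Subtype.coe_injective hab)
    simpa [Fin.ext_iff] using this
  · intro j
    have h2 := (htfin.toFinset.equivFin.symm (Fin.cast hcard.symm j)).2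
    rw [Set.Finite.mem_toFinset] at h2
    exact hts h2

theorem hasGe_iff {S : Type*} {C : Set S} {m : ℕ} :
    HasGe C m ↔ (C.Infinite ∨ (C.Finite ∧ m ≤ C.ncard)) := by
  constructor
  · rintro ⟨g, hg, hmem⟩
    by_cases hC : C.Finite
    · refine Or.inr ⟨hC, ?_⟩
      have hsub : (Set.range g) ⊆ C := by rintro _ ⟨j, rfl⟩; exact hmem j
      have h1 : (Set.range g).ncard = m := by
        rw [← Set.image_univ, Set.ncard_image_of_injective _ hg, Set.ncard_univ]
        simp
      calc m = (Set.range g).ncard := h1.symm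
        _ ≤ C.ncard := Set.ncard_le_ncard hsub hC
    · exact Or.inl hC
  · rintro (hC | ⟨hC, hm⟩)
    · obtain ⟨t, hts, htfin, htcard⟩ := hC.exists_subset_ncard_eq m
      exact hasGe_of_subset hts htfin htcard
    · obtain ⟨t, hts, htcard⟩ := Set.exists_subset_card_eq hm
      exact hasGe_of_subset hts (hC.subset hts) htcard



theorem SameSize.symm {S T : Type*} {C : Set S} {D : Set T} (h : SameSize C D) :
    SameSize D C := fun m => (h m).symm

theorem sameSize_iff {S T : Type*} {C : Set S} {D : Set T} :
    SameSize C D ↔ ((C.Infinite ∧ D.Infinite) ∨ (C.Finite ∧ D.Finite ∧ C.ncard = D.ncard)) := by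
  constructor
  · intro h
    by_cases hC : C.Finite
    · have hD : D.Finite := by
        by_contra hD
        have h1 : HasGe C (C.ncard + 1) := (h _).mpr (hasGe_iff.mpr (Or.inl hD))
        rcases hasGe_iff.mp h1 with h2 | ⟨-, h2⟩
        · exact h2 hC
        · omega
      refine Or.inr ⟨hC, hD, ?_⟩
      have h1 := (h C.ncard).mp (hasGe_iff.mpr (Or.inr ⟨hC, le_refl _⟩))
      have h2 := (h D.ncard).mpr (hasGe_iff.mpr (Or.inr ⟨hD, le_refl _⟩))
      rcases hasGe_iff.mp h1 with h3 | ⟨-, h3⟩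
      · exact absurd hD h3
      rcases hasGe_iff.mp h2 with h4 | ⟨-, h4⟩
      · exact absurd hC h4
      omega
    · have hD : D.Infinite := by
        by_contra hD
        rw [Set.not_infinite] at hD
        have h1 : HasGe D (D.ncard + 1) := (h _).mp (hasGe_iff.mpr (Or.inl hC))
        rcases hasGe_iff.mp h1 with h2 | ⟨-, h2⟩
        · exact h2 hD
        · omega
      exact Or.inl ⟨hC, hD⟩
  · rintro (⟨hC, hD⟩ | ⟨hC, hD, hcd⟩) m <;> rw [hasGe_iff, hasGe_iff]
    · simp only [hC, hD, true_or]
    · simp [hC, hD, hcd]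



theorem infinite_split {T : Type*} {D : Set T} (hD : D.Infinite) :
    ∃ W ⊆ D, W.Infinite ∧ (D \ W).Infinite := by
  classical
  let f := hD.natEmbedding
  refine ⟨Set.range (fun k => (f (2 * k) : T)), ?_, ?_, ?_⟩
  · rintro _ ⟨k, rfl⟩; exact (f (2 * k)).2
  · apply Set.infinite_range_of_injective
    intro a b hab
    have := f.injective (Subtype.coe_injective hab)
    omega
  · apply Set.Infinite.mono (s := Set.range (fun k => (f (2 * k + 1) : T)))
      (h := ?_) ?_
    · rintro _ ⟨k, rfl⟩
      refine ⟨(f (2 * k + 1)).2, ?_⟩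
      rintro ⟨j, hj⟩
      have := f.injective (Subtype.coe_injective hj)
      omega
    · apply Set.infinite_range_of_injective
      intro a b hab
      have := f.injective (Subtype.coe_injective hab)
      omega

theorem sameSize_split {S T : Type*} {C : Set S} {D : Set T} (h : SameSize C D) (Z : Set S) :
    ∃ W ⊆ D, SameSize (C ∩ Z) W ∧ SameSize (C \ Z) (D \ W) := by
  classical
  rcases sameSize_iff.mp h with ⟨hC, hD⟩ | ⟨hC, hD, hcd⟩
  · -- both infinite
    by_cases ha : (C ∩ Z).Finite
    · -- C \ Z infinite
      have hb : (C \ Z).Infinite := by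
        intro hb
        apply hC
        apply (ha.union hb).subset
        intro s hs
        by_cases hsZ : s ∈ Z
        · exact Set.mem_union_left _ ⟨hs, hsZ⟩
        · exact Set.mem_union_right _ ⟨hs, hsZ⟩
      obtain ⟨t, htD, htfin, htcard⟩ := hD.exists_subset_ncard_eq (C ∩ Z).ncard
      refine ⟨t, htD, ?_, ?_⟩
      · exact sameSize_iff.mpr (Or.inr ⟨ha, htfin, htcard.symm⟩)
      · exact sameSize_iff.mpr (Or.inl ⟨hb, hD.diff htfin⟩)
    · by_cases hb : (C \ Z).Finite
      · obtain ⟨t, htD, htfin, htcard⟩ := hD.exists_subset_ncard_eq (C \ Z).ncard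
        refine ⟨D \ t, Set.diff_subset, ?_, ?_⟩
        · exact sameSize_iff.mpr (Or.inl ⟨ha, hD.diff htfin⟩)
        · have : D \ (D \ t) = t := Set.diff_diff_cancel_left htD
          rw [this]
          exact sameSize_iff.mpr (Or.inr ⟨hb, htfin, htcard.symm⟩)
      · obtain ⟨W, hWD, hW, hDW⟩ := infinite_split hD
        exact ⟨W, hWD, sameSize_iff.mpr (Or.inl ⟨ha, hW⟩),
          sameSize_iff.mpr (Or.inl ⟨hb, hDW⟩)⟩
  · -- both finite with equal card
    have ha : (C ∩ Z).ncard ≤ D.ncard := by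
      rw [← hcd]
      exact Set.ncard_le_ncard Set.inter_subset_left hC
    obtain ⟨t, htD, htcard⟩ := Set.exists_subset_card_eq ha
    refine ⟨t, htD, ?_, ?_⟩
    · exact sameSize_iff.mpr (Or.inr ⟨hC.inter_of_left _, hD.subset htD, htcard.symm⟩)
    · refine sameSize_iff.mpr (Or.inr ⟨hC.diff, hD.diff, ?_⟩)
      rw [Set.ncard_diff htD (hD.subset htD), htcard, ← hcd,
        ← Set.ncard_inter_add_ncard_diff_eq_ncard C Z hC]
      omega


theorem hasGe_one {S : Type*} {C : Set S} : HasGe C 1 ↔ C.Nonempty := by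
  constructor
  · rintro ⟨g, -, hg⟩; exact ⟨g 0, hg 0⟩
  · rintro ⟨s, hs⟩
    exact ⟨fun _ => s, fun a b _ => Subsingleton.elim a b, fun _ => hs⟩

section Cells
/-- The cell with sign pattern `ε` of the family `u`. -/
def Cell {γ : Type*} {S : Type*} (ε : γ → Bool) (u : γ → Set S) : Set S :=
  {s | ∀ i, s ∈ u i ↔ ε i = true}

open Classical in
/-- The sign pattern of an element with respect to a family of sets. -/
noncomputable def pat {γ S : Type*} (u : γ → Set S) (s : S) : γ → Bool :=
  fun i => decide (s ∈ u i)

theorem mem_cell_pat {γ S : Type*} (u : γ → Set S) (s : S) :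
    s ∈ Cell (pat u s) u := by
  intro i
  simp [pat]

theorem cell_pat_eq {γ S : Type*} {u : γ → Set S} {s : S} {ε : γ → Bool}
    (hs : s ∈ Cell ε u) : pat u s = ε := by
  funext i
  have := hs i
  by_cases h : s ∈ u i
  · simp [pat, h, (this.mp h)]
  · have h' : ε i ≠ true := fun hh => h (this.mpr hh)
    have h2 : pat u s i = false := by simp [pat, h]
    rw [h2, Eq.comm, ← Bool.not_eq_true, ← ne_eq]
    exact h'

theorem cell_disjoint {γ S : Type*} {u : γ → Set S} {s : S} {ε ε' : γ → Bool}
    (h : s ∈ Cell ε u) (h' : s ∈ Cell ε' u) : ε = ε' :=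
  (cell_pat_eq h).symm.trans (cell_pat_eq h')

/-- Equivalence of two families of sets: corresponding cells have the same
(truncated-at-infinity) size. -/
def CellEquiv {γ S T : Type*} (u : γ → Set S) (u' : γ → Set T) : Prop :=
  ∀ ε : γ → Bool, SameSize (Cell ε u) (Cell ε u')

theorem CellEquiv.symm {γ S T : Type*} {u : γ → Set S} {u' : γ → Set T}
    (h : CellEquiv u u') : CellEquiv u' u := fun ε => (h ε).symm

theorem cellEquiv_extend {γ S T : Type*} {u : γ → Set S} {u' : γ → Set T}
    (h : CellEquiv u u') (Z : Set S) :
    ∃ W : Set T, ∀ (ε : γ → Bool) (b : Bool),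
      SameSize (Cell ε u ∩ (bif b then Z else Zᶜ)) (Cell ε u' ∩ (bif b then W else Wᶜ)) := by
  classical
  choose Wf hWf hW1 hW2 using fun ε => sameSize_split (h ε) Z
  refine ⟨⋃ ε, Wf ε, fun ε b => ?_⟩
  have key : Cell ε u' ∩ (⋃ ε', Wf ε') = Wf ε := by
    apply Set.Subset.antisymm
    · rintro s ⟨hc, hw⟩
      rw [Set.mem_iUnion] at hw
      obtain ⟨ε', hε'⟩ := hw
      have : ε' = ε := cell_disjoint (hWf ε' hε') hc
      exact this ▸ hε'
    · intro s hs
      exact ⟨hWf ε hs, Set.mem_iUnion.mpr ⟨ε, hs⟩⟩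
  have hcompl : Cell ε u' ∩ (⋃ ε', Wf ε')ᶜ = Cell ε u' \ Wf ε := by
    rw [← Set.diff_eq]
    ext s
    simp only [Set.mem_diff, Set.mem_iUnion, not_exists]
    constructor
    · rintro ⟨hc, hw⟩; exact ⟨hc, hw ε⟩
    · rintro ⟨hc, hw⟩
      refine ⟨hc, fun ε' hε' => ?_⟩
      have : ε' = ε := cell_disjoint (hWf ε' hε') hc
      exact hw (this ▸ hε')
  cases b
  · simp only [Bool.cond_false]
    rw [hcompl, ← Set.diff_eq]
    exact hW2 ε
  · simp only [Bool.cond_true]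
    rw [key]
    exact hW1 ε

end Cells


/-- Evaluation of a Boolean-language function symbol on booleans. -/
def bfun : ∀ {l : ℕ}, boolLang.Functions l → (Fin l → Bool) → Bool
  | 0, b, _ => b
  | 1, _, v => !(v 0)
  | 2, b, v => bif b then v 0 || v 1 else v 0 && v 1
  | (_ + 3), e, _ => e.elim

/-- Evaluation of a Boolean-language term on booleans. -/
def tEval {γ : Type*} : boolLang.Term γ → (γ → Bool) → Bool
  | .var i, ε => ε i
  | .func f ts, ε => bfun f (fun i => tEval (ts i) ε)

theorem term_mem {γ : Type*} {S : Type*} (t : boolLang.Term γ) (u : γ → Set S) (s : S) :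
    s ∈ Term.realize u t ↔ tEval t (pat u s) = true := by
  induction t with
  | var i => simp [Term.realize, tEval, pat]
  | @func l f ts ih =>
    match l, f with
    | 0, b =>
      cases b <;>
        simp [Term.realize, tEval, bfun, Structure.funMap, boolStructure]
    | 1, u =>
      simp only [Term.realize, tEval, bfun, Structure.funMap, boolStructure]
      rw [Set.mem_compl_iff]
      rw [ih 0]
      simp
    | 2, b =>
      cases b <;>
        simp only [Term.realize, tEval, bfun, Structure.funMap, boolStructure, Bool.cond_true,
          Bool.cond_false, Set.sup_eq_union, Set.inf_eq_inter, Set.mem_union, Set.mem_inter_iff,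
          Bool.and_eq_true, Bool.or_eq_true, ih 0, ih 1]
    | (l + 3), e => exact e.elim

theorem term_eq_pattern {γ : Type*} {S : Type*} (t₁ t₂ : boolLang.Term γ) (u : γ → Set S) :
    Term.realize u t₁ = Term.realize u t₂ ↔
      ∀ ε : γ → Bool, (Cell ε u).Nonempty → tEval t₁ ε = tEval t₂ ε := by
  constructor
  · intro h ε ⟨s, hs⟩
    have hp : pat u s = ε := cell_pat_eq hs
    have h1 := (term_mem t₁ u s).symm
    have h2 := term_mem t₂ u s
    rw [hp] at h1 h2
    have : tEval t₁ ε = true ↔ tEval t₂ ε = true := h1.trans (h ▸ h2)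
    rcases Bool.eq_false_or_eq_true (tEval t₁ ε) with h' | h' <;>
      rcases Bool.eq_false_or_eq_true (tEval t₂ ε) with h'' | h'' <;>
      simp_all
  · intro h
    ext s
    rw [term_mem, term_mem, h (pat u s) ⟨s, mem_cell_pat u s⟩]



theorem mem_cond {S : Type*} (b : Bool) (Z : Set S) (s : S) :
    s ∈ (bif b then Z else Zᶜ) ↔ (s ∈ Z ↔ b = true) := by
  cases b <;> simp

theorem cell_snoc {α : Type*} {m : ℕ} {S : Type*} (x : α → Set S) (v : Fin m → Set S)
    (Z : Set S) (ε : α ⊕ Fin (m + 1) → Bool) :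
    Cell ε (Sum.elim x (Fin.snoc v Z)) =
      Cell (fun i => ε (Sum.map id Fin.castSucc i)) (Sum.elim x v) ∩
        (bif ε (Sum.inr (Fin.last m)) then Z else Zᶜ) := by
  ext s
  constructor
  · intro h
    refine ⟨fun i => ?_, (mem_cond _ _ _).mpr ?_⟩
    · cases i with
      | inl a => exact h (Sum.inl a)
      | inr j =>
        have := h (Sum.inr j.castSucc)
        simpa [Fin.snoc_castSucc] using this
    · have := h (Sum.inr (Fin.last m))
      simpa [Fin.snoc_last] using this
  · rintro ⟨h1, h2⟩ i
    rw [mem_cond] at h2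
    cases i with
    | inl a => exact h1 (Sum.inl a)
    | inr j =>
      induction j using Fin.lastCases with
      | last => simpa [Fin.snoc_last] using h2
      | cast j =>
        have := h1 (Sum.inr j)
        simpa [Fin.snoc_castSucc] using this

theorem cellEquiv_snoc {α : Type*} {m : ℕ} {S T : Type*} {x : α → Set S} {v : Fin m → Set S}
    {y : α → Set T} {w : Fin m → Set T}
    (h : CellEquiv (Sum.elim x v) (Sum.elim y w)) (Z : Set S) :
    ∃ W : Set T, CellEquiv (Sum.elim x (Fin.snoc v Z)) (Sum.elim y (Fin.snoc w W)) := by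
  obtain ⟨W, hW⟩ := cellEquiv_extend h Z
  refine ⟨W, fun ε => ?_⟩
  rw [cell_snoc, cell_snoc]
  exact hW _ _

theorem ef {σ τ : Type*} {α : Type*} : ∀ {m : ℕ} (φ : boolLang.BoundedFormula α m)
    (x : α → Set σ) (v : Fin m → Set σ) (y : α → Set τ) (w : Fin m → Set τ),
      CellEquiv (Sum.elim x v) (Sum.elim y w) → (φ.Realize x v ↔ φ.Realize y w) := by
  intro m φ
  induction φ with
  | falsum => intro x v y w h; simp [BoundedFormula.Realize]
  | equal t₁ t₂ =>
    intro x v y w h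
    simp only [BoundedFormula.Realize]
    rw [term_eq_pattern, term_eq_pattern]
    have hne : ∀ ε,
        (Cell ε (Sum.elim x v)).Nonempty ↔ (Cell ε (Sum.elim y w)).Nonempty := by
      intro ε
      rw [← hasGe_one, ← hasGe_one]
      exact h ε 1
    constructor
    · intro hh ε hne'; exact hh ε ((hne ε).mpr hne')
    · intro hh ε hne'; exact hh ε ((hne ε).mp hne')
  | rel R ts => exact R.elim
  | imp φ ψ ih1 ih2 =>
    intro x v y w h
    simp only [BoundedFormula.realize_imp]
    exact imp_congr (ih1 x v y w h) (ih2 x v y w h)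
  | all φ ih =>
    intro x v y w h
    simp only [BoundedFormula.realize_all]
    constructor
    · intro hall W
      obtain ⟨Z, hZ⟩ := cellEquiv_snoc h.symm W
      exact (ih x (Fin.snoc v Z) y (Fin.snoc w W) hZ.symm).mp (hall Z)
    · intro hall Z
      obtain ⟨W, hW⟩ := cellEquiv_snoc h Z
      exact (ih x (Fin.snoc v Z) y (Fin.snoc w W) hW).mpr (hall W)


end Aux

section Counting

variable {L : FirstOrder.Language.{u, v}}

/-- The variable term for coordinate `c` of the `j`-th tuple among `m` `n`-tuples. -/
def tupTerm (k n m : ℕ) (j : Fin m) (c : Fin n) :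
    (L.sum (relLang k fun _ => n)).Term (Empty ⊕ Fin (m * n)) :=
  Term.var (Sum.inr (finProdFinEquiv (j, c)))

/-- Body of the counting sentence: `m` pairwise-distinct `n`-tuples, each realizing the
sign pattern `δ` with respect to the `k` fresh relation symbols. -/
noncomputable def countBody (L : FirstOrder.Language.{u, v}) (k n m : ℕ) (δ : Fin k → Bool) :
    (L.sum (relLang k fun _ => n)).BoundedFormula Empty (m * n) :=
  (BoundedFormula.iInf fun p : Fin m × Fin k =>
    bif δ p.2
    then Relations.boundedFormula (Sum.inr ⟨p.2, rfl⟩) (fun c => tupTerm k n m p.1 c)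
    else ∼(Relations.boundedFormula (Sum.inr ⟨p.2, rfl⟩) (fun c => tupTerm k n m p.1 c))) ⊓
  (BoundedFormula.iInf fun p : Fin m × Fin m =>
    if p.1 = p.2 then ⊤
    else ∼(BoundedFormula.iInf fun c : Fin n =>
      Term.bdEqual (tupTerm k n m p.1 c) (tupTerm k n m p.2 c)))

/-- The sentence expressing that the cell with sign pattern `δ` has at least `m` elements. -/
noncomputable def countSentence (L : FirstOrder.Language.{u, v}) (k n m : ℕ)
    (δ : Fin k → Bool) : (L.sum (relLang k fun _ => n)).Sentence :=
  (countBody L k n m δ).exs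

theorem realizeWith_countSentence {A : Type w} [L.Structure A] {k n m : ℕ} (δ : Fin k → Bool)
    (S : ∀ i : Fin k, Set (Fin ((fun _ => n) i) → A)) :
    RealizeWith A (countSentence L k n m δ) S ↔
      HasGe (Cell δ (fun i => (S i : Set (Fin n → A)))) m := by
  letI := relStructure S
  show A ⊨ countSentence L k n m δ ↔ _
  rw [countSentence, Sentence.Realize, BoundedFormula.realize_exs]
  constructor
  · rintro ⟨xs, hx⟩
    rw [countBody, BoundedFormula.realize_inf, BoundedFormula.realize_iInf,
      BoundedFormula.realize_iInf] at hx
    refine ⟨fun j c => xs (finProdFinEquiv (j, c)), ?_, ?_⟩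
    · intro a b hab
      by_contra hne
      have h2 := hx.2 (a, b)
      rw [if_neg hne, BoundedFormula.realize_not, BoundedFormula.realize_iInf] at h2
      apply h2
      intro c
      rw [BoundedFormula.realize_bdEqual]
      simp only [tupTerm, Term.realize_var, Sum.elim_inr]
      exact congrFun hab c
    · intro j i
      have h1 := hx.1 (j, i)
      cases hδ : δ i
      · erw [hδ, Bool.cond_false, BoundedFormula.realize_not, BoundedFormula.realize_rel] at h1
        simp only [tupTerm, Term.realize_var, Sum.elim_inr] at h1
        simp only [Bool.false_eq_true, iff_false]
        exact h1
      · erw [hδ, Bool.cond_true, BoundedFormula.realize_rel] at h1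
        simp only [tupTerm, Term.realize_var, Sum.elim_inr] at h1
        simp only [iff_true]
        exact h1
  · rintro ⟨g, ginj, gmem⟩
    refine ⟨fun p => g (finProdFinEquiv.symm p).1 (finProdFinEquiv.symm p).2, ?_⟩
    have hxs : ∀ (j : Fin m) (c : Fin n),
        g (finProdFinEquiv.symm (finProdFinEquiv (j, c))).1
          (finProdFinEquiv.symm (finProdFinEquiv (j, c))).2 = g j c := by
      intro j c
      rw [Equiv.symm_apply_apply]
    rw [countBody, BoundedFormula.realize_inf, BoundedFormula.realize_iInf,
      BoundedFormula.realize_iInf]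
    constructor
    · rintro ⟨j, i⟩
      have hmem := gmem j i
      cases hδ : δ i
      · erw [Bool.cond_false, BoundedFormula.realize_not, BoundedFormula.realize_rel]
        simp only [tupTerm, Term.realize_var, Sum.elim_inr, hxs]
        rw [hδ] at hmem
        simp only [hδ] at hmem ⊢
        intro hc
        exact absurd (hmem.mp hc) (by simp)
      · erw [Bool.cond_true, BoundedFormula.realize_rel]
        simp only [tupTerm, Term.realize_var, Sum.elim_inr, hxs]
        rw [hδ] at hmem
        exact hmem.mpr rfl
    · rintro ⟨j, j'⟩
      by_cases hjj : j = j'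
      · rw [if_pos hjj]
        exact BoundedFormula.realize_top.mpr trivial
      · rw [if_neg hjj, BoundedFormula.realize_not, BoundedFormula.realize_iInf]
        intro hall
        apply hjj
        apply ginj
        funext c
        have := hall c
        rw [BoundedFormula.realize_bdEqual] at this
        simpa only [tupTerm, Term.realize_var, Sum.elim_inr, hxs] using this

end Counting

section Transfer

variable {L : FirstOrder.Language.{u, v}} {A : Type w} {B : Type x}
  [L.Structure A] [L.Structure B]

theorem cell_transfer (f : PartialTeamMap L A B) (hTot : f.Total) (hEl : f.IsElementary)
    (n : ℕ) {k : ℕ} (X : Fin k → Set (Fin n → A)) (ε : Fin k → Bool) :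
    SameSize (Cell ε X) (Cell ε fun i => f.toFun n (X i)) := by
  classical
  intro m
  by_cases hbad : ∃ i, ε i = true ∧ X i = ∅
  · obtain ⟨i, hεi, hXi⟩ := hbad
    have h1 : Cell ε X = ∅ := by
      ext s
      simp only [Set.mem_empty_iff_false, iff_false]
      intro hs
      have h3 : s ∈ X i := (hs i).mpr hεi
      rw [hXi] at h3
      exact h3
    have h2 : Cell ε (fun i => f.toFun n (X i)) = ∅ := by
      ext s
      simp only [Set.mem_empty_iff_false, iff_false]
      intro hs
      have h3 : s ∈ f.toFun n (X i) := (hs i).mpr hεi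
      rw [hXi, f.map_empty n] at h3
      exact h3
    rw [h1, h2]
    constructor
    · rintro ⟨g, ginj, gmem⟩
      exact ⟨fun j => absurd (gmem j) (Set.notMem_empty _), fun a b h =>
        absurd (gmem a) (Set.notMem_empty _), fun j => absurd (gmem j) (Set.notMem_empty _)⟩
    · rintro ⟨g, ginj, gmem⟩
      exact ⟨fun j => absurd (gmem j) (Set.notMem_empty _), fun a b h =>
        absurd (gmem a) (Set.notMem_empty _), fun j => absurd (gmem j) (Set.notMem_empty _)⟩
  · push_neg at hbad
    have hbad' : ∀ i, X i = ∅ → ε i = false := by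
      intro i hXi
      rcases Bool.eq_false_or_eq_true (ε i) with h | h
      · exact absurd hXi (Set.nonempty_iff_ne_empty.mp (hbad i h))
      · exact h
    set ι := {i : Fin k // (X i).Nonempty} with hι
    let e : Fin (Fintype.card ι) ≃ ι := (Fintype.equivFin ι).symm
    have key := hEl (Fintype.card ι) (fun _ => n)
      (countSentence L (Fintype.card ι) n m (fun q => ε (e q)))
      (fun q => X (e q))
      (fun q => by rw [hTot]; exact Set.mem_univ _)
      (fun q => (e q).2)
    rw [realizeWith_countSentence, realizeWith_countSentence] at key
    have hcells : ∀ (u : ∀ i : Fin k, Set (Fin n → A)),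
        (∀ i, X i = ∅ → u i = ∅) → (∀ i, (X i).Nonempty → (u i).Nonempty → True) →
        True := fun _ _ _ => trivial
    have h1 : Cell ε X = Cell (fun q => ε (e q)) (fun q => X (e q)) := by
      ext s
      constructor
      · intro hs q
        exact hs (e q)
      · intro hs i
        by_cases hXi : (X i).Nonempty
        · have := hs (Fintype.equivFin ι ⟨i, hXi⟩)
          simpa only [e, Equiv.symm_apply_apply] using this
        · rw [Set.not_nonempty_iff_eq_empty] at hXi
          show s ∈ X i ↔ ε i = true
          rw [hXi, hbad' i hXi]
          simp
    have h2 : Cell ε (fun i => f.toFun n (X i)) =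
        Cell (fun q => ε (e q)) (fun q => f.toFun n (X (e q))) := by
      ext s
      constructor
      · intro hs q
        exact hs (e q)
      · intro hs i
        by_cases hXi : (X i).Nonempty
        · have := hs (Fintype.equivFin ι ⟨i, hXi⟩)
          simpa only [e, Equiv.symm_apply_apply] using this
        · rw [Set.not_nonempty_iff_eq_empty] at hXi
          show s ∈ f.toFun n (X i) ↔ ε i = true
          rw [hXi, f.map_empty n, hbad' i hXi]
          simp
    rw [h1, h2]
    exact key

theorem cell_sum_zero {S : Type*} {k : ℕ} (X : Fin k → Set S) (v : Fin 0 → Set S)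
    (ε : Fin k ⊕ Fin 0 → Bool) :
    Cell ε (Sum.elim X v) = Cell (fun i => ε (Sum.inl i)) X := by
  ext s
  constructor
  · intro hs i
    exact hs (Sum.inl i)
  · intro hs i
    cases i with
    | inl i => exact hs i
    | inr j => exact j.elim0

end Transfer

/-- **An elementary team embedding restricts, on each arity, to an elementary
embedding of powerset Boolean algebras** `Pow(Aⁿ) → Pow(Bⁿ)`. -/
theorem elemTeamEmbedding_boolean_elementary
    {L : FirstOrder.Language.{u, v}} {A : Type w} {B : Type x}
    [L.Structure A] [L.Structure B]
    (f : PartialTeamMap L A B) (hTot : f.Total) (hEl : f.IsElementary) (n : ℕ) :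
    ∃ e : (Set (Fin n → A)) ↪ₑ[boolLang] (Set (Fin n → B)),
      ∀ X : Set (Fin n → A), e X = f.toFun n X := by
  refine ⟨⟨f.toFun n, ?_⟩, fun X => rfl⟩
  intro k φ x
  have h : CellEquiv (Sum.elim x (default : Fin 0 → Set (Fin n → A)))
      (Sum.elim (f.toFun n ∘ x) (default : Fin 0 → Set (Fin n → B))) := by
    intro ε
    rw [cell_sum_zero, cell_sum_zero]
    exact cell_transfer f hTot hEl n x _
  have hh := (ef φ x default (f.toFun n ∘ x) default h).symm
  rw [Formula.Realize, Formula.Realize]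
  convert hh using 2 <;> exact Subsingleton.elim _ _

end TeamSem
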